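/- Let X and Y be Δ-generated topological spaces and let f : X → Y be a quotient map. Then Y is Δ-Hausdorff if and only if the set {(x₁,x₂) ∈ X × X : f(x₁) = f(x₂)} is a closed subset of the Δ-kelleyfication of the product space X × X. -/

import Mathlib

open Topology

/-- A topological space `X` is *Δ-Hausdorff* if the image of every continuous map
`[0,1] → X` is closed in `X`. -/
def DeltaHausdorff (X : Type*) [TopologicalSpace X] : Prop :=
  ∀ f : C(unitInterval, X), IsClosed (Set.range f)

open TopologicalSpace Set Filter

section Helpers

variable {Z W : Type*} [TopologicalSpace Z] [TopologicalSpace W]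

lemma DH.isOpen_deltaGenerated_iff {u : Set Z} :
    IsOpen[deltaGenerated Z] u ↔ ∀ (n : ℕ) (p : C(Fin n → ℝ, Z)), IsOpen (p ⁻¹' u) := by
  simp only [TopologicalSpace.deltaGenerated, isOpen_iSup_iff, isOpen_coinduced, Sigma.forall]

lemma DH.deltaGenerated_eq_generatedBy :
    deltaGenerated Z = generatedBy (fun n : ℕ => Fin n → ℝ) := by
  rw [TopologicalSpace.deltaGenerated, TopologicalSpace.generatedBy, iSup_sigma]

/-- Preimages of Δ-open sets under continuous maps from Δ-generated spaces are open. -/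
lemma DH.isOpen_preimage_of_deltaGen [DeltaGeneratedSpace W] {u : Set Z}
    (hu : IsOpen[deltaGenerated Z] u) {g : W → Z} (hg : Continuous g) :
    IsOpen (g ⁻¹' u) :=
  (IsGeneratedBy.isOpen_iff (fun n : ℕ => Fin n → ℝ)).2 fun n h =>
    (DH.isOpen_deltaGenerated_iff.1 hu) n (ContinuousMap.comp ⟨g, hg⟩ h)

lemma DH.isClosed_deltaGenerated_iff {c : Set Z} :
    IsClosed[deltaGenerated Z] c ↔ ∀ (n : ℕ) (p : C(Fin n → ℝ, Z)), IsClosed (p ⁻¹' c) := by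
  rw [← @isOpen_compl_iff Z c (deltaGenerated Z), DH.isOpen_deltaGenerated_iff]
  simp only [Set.preimage_compl, isOpen_compl_iff]

lemma DH.deltaGen_isClosed_iff [DeltaGeneratedSpace Z] {c : Set Z} :
    IsClosed c ↔ ∀ (n : ℕ) (p : C(Fin n → ℝ, Z)), IsClosed (p ⁻¹' c) := by
  rw [← isOpen_compl_iff, IsGeneratedBy.isOpen_iff (fun n : ℕ => Fin n → ℝ)]
  simp only [Set.preimage_compl, isOpen_compl_iff]

lemma DH.homeomorph_deltaGen (h : W ≃ₜ Z) [DeltaGeneratedSpace W] : DeltaGeneratedSpace Z :=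
  h.isQuotientMap.deltaGeneratedSpace

instance DH.deltaGen_euclidean (n : ℕ) : DeltaGeneratedSpace (Fin n → ℝ) :=
  (inferInstance : IsGeneratedBy (fun n : ℕ => Fin n → ℝ) ((fun n : ℕ => Fin n → ℝ) n))

instance DH.deltaGen_euclidean_prod (m k : ℕ) :
    DeltaGeneratedSpace ((Fin m → ℝ) × (Fin k → ℝ)) :=
  DH.homeomorph_deltaGen
    ((Homeomorph.piCongrLeft (Y := fun _ => ℝ) finSumFinEquiv).symm.trans
      Homeomorph.sumArrowHomeomorphProdArrow)

/-- Tube-lemma-style helper. -/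
lemma DH.isOpen_setOf_compact_prod_subset {L X : Type*} [TopologicalSpace L] [TopologicalSpace X]
    {K : Set L} (hK : IsCompact K) {O : Set (L × X)} (hO : IsOpen O) :
    IsOpen {x : X | ∀ l ∈ K, (l, x) ∈ O} := by
  rw [isOpen_iff_forall_mem_open]
  intro x hx
  obtain ⟨u, v, hu, hv, hKu, hxv, huv⟩ :=
    generalized_tube_lemma hK isCompact_singleton hO (by
      rintro ⟨l, x'⟩ ⟨hl, hx'⟩
      rw [Set.mem_singleton_iff] at hx'
      subst hx'
      exact hx l hl)
  exact ⟨v, fun x' hx' l hl => huv ⟨hKu hl, hx'⟩, hv, hxv rfl⟩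

/-- A quotient map crossed with the identity of a locally compact space is a quotient map. -/
lemma DH.isQuotientMap_prodMap_id_left {L X Y : Type*} [TopologicalSpace L] [TopologicalSpace X]
    [TopologicalSpace Y] [LocallyCompactSpace L] {f : X → Y} (hf : IsQuotientMap f) :
    IsQuotientMap (Prod.map (id : L → L) f) := by
  suffices h : Function.Surjective (Prod.map (id : L → L) f) ∧
      ∀ U : Set (L × Y), IsOpen U ↔ IsOpen (Prod.map (id : L → L) f ⁻¹' U) from
    ⟨.of_isOpen_preimage_iff_isOpen fun U => (h.2 U).symm, h.1⟩
  refine ⟨fun ⟨l, y⟩ => ?_, fun U => ⟨fun hU => hU.preimage (continuous_id.prodMap hf.continuous),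
    fun hP => ?_⟩⟩
  · obtain ⟨x, rfl⟩ := hf.surjective y
    exact ⟨(l, x), rfl⟩
  · rw [isOpen_iff_mem_nhds]
    rintro ⟨l₀, y₀⟩ hmem
    obtain ⟨x₀, rfl⟩ := hf.surjective y₀
    have hV : IsOpen {l : L | (l, x₀) ∈ Prod.map (id : L → L) f ⁻¹' U} :=
      hP.preimage (continuous_id.prodMk continuous_const)
    obtain ⟨K, hKc, hK0, hKV⟩ := exists_compact_subset hV hmem
    have hW : IsOpen {x : X | ∀ l ∈ K, (l, x) ∈ Prod.map (id : L → L) f ⁻¹' U} :=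
      DH.isOpen_setOf_compact_prod_subset hKc hP
    have hW' : IsOpen {y : Y | ∀ l ∈ K, (l, y) ∈ U} := by
      rw [← hf.isOpen_preimage]
      exact hW
    refine Filter.mem_of_superset
      (prod_mem_nhds (isOpen_interior.mem_nhds hK0) (hW'.mem_nhds fun l hl => hKV hl)) ?_
    rintro ⟨l, y⟩ ⟨hl, hy⟩
    exact hy l (interior_subset hl)

lemma DH.isQuotientMap_prodMap_id_right {L X Y : Type*} [TopologicalSpace L] [TopologicalSpace X]
    [TopologicalSpace Y] [LocallyCompactSpace L] {f : X → Y} (hf : IsQuotientMap f) :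
    IsQuotientMap (Prod.map f (id : L → L)) := by
  have h := ((Homeomorph.prodComm L Y).isQuotientMap.comp
    ((DH.isQuotientMap_prodMap_id_left (L := L) hf).comp
      (Homeomorph.prodComm X L).isQuotientMap))
  have : (Homeomorph.prodComm L Y) ∘ (Prod.map (id : L → L) f) ∘ (Homeomorph.prodComm X L)
      = Prod.map f (id : L → L) := by
    ext ⟨x, l⟩ <;> rfl
  rwa [this] at h

/-- The product of a euclidean space with a Δ-generated space is Δ-generated. -/
lemma DH.deltaGen_prod_left (m : ℕ) {X : Type*} [TopologicalSpace X] [DeltaGeneratedSpace X] :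
    DeltaGeneratedSpace ((Fin m → ℝ) × X) := by
  refine IsGeneratedBy.iff_le_generatedBy.2 ?_
  rw [← DH.deltaGenerated_eq_generatedBy, ← isOpen_implies_isOpen_iff]
  intro U hU
  rw [isOpen_iff_mem_nhds]
  rintro ⟨l₀, x₀⟩ hmem
  have hslice : IsOpen {l : Fin m → ℝ | (l, x₀) ∈ U} :=
    DH.isOpen_preimage_of_deltaGen hU (continuous_id.prodMk continuous_const)
  obtain ⟨K, hKc, hK0, hKs⟩ := exists_compact_subset hslice hmem
  have hV : IsOpen {x : X | ∀ l ∈ K, (l, x) ∈ U} := by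
    rw [IsGeneratedBy.isOpen_iff (fun n : ℕ => Fin n → ℝ)]
    intro k p
    have hW : IsOpen (Prod.map (id : (Fin m → ℝ) → (Fin m → ℝ)) p ⁻¹' U) :=
      DH.isOpen_preimage_of_deltaGen hU (continuous_id.prodMap p.continuous)
    exact DH.isOpen_setOf_compact_prod_subset hKc hW
  refine Filter.mem_of_superset
    (prod_mem_nhds (isOpen_interior.mem_nhds hK0) (hV.mem_nhds fun l hl => hKs hl)) ?_
  rintro ⟨l, x⟩ ⟨hl, hx⟩
  exact hx l (interior_subset hl)

lemma DH.deltaGen_prod_right (m : ℕ) {X : Type*} [TopologicalSpace X] [DeltaGeneratedSpace X] :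
    DeltaGeneratedSpace (X × (Fin m → ℝ)) :=
  letI := DH.deltaGen_prod_left m (X := X)
  DH.homeomorph_deltaGen (Homeomorph.prodComm _ X)

end Helpers

section Coincidence

variable {Y : Type*} [TopologicalSpace Y]

/-- In a Δ-Hausdorff space, singletons are closed. -/
lemma DH.singleton_closed (hY : DeltaHausdorff Y) (z : Y) : IsClosed ({z} : Set Y) := by
  have := hY ⟨fun _ => z, continuous_const⟩
  simpa [Set.range_const] using this

/-- In a Δ-Hausdorff space, the coincidence set of two paths defined on all of `ℝ` is closed. -/
lemma DH.coincidence_closed_real (hY : DeltaHausdorff Y)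
    {γ₁ γ₂ : ℝ → Y} (h₁ : Continuous γ₁) (h₂ : Continuous γ₂) :
    IsClosed {s : ℝ | γ₁ s = γ₂ s} := by
  refine isClosed_of_closure_subset fun s₀ hs₀ => ?_
  obtain ⟨u, hu, hus⟩ := mem_closure_iff_seq_limit.1 hs₀
  set z := γ₂ s₀ with hz_def
  have hz : Filter.Tendsto (fun j => γ₁ (u j)) atTop (𝓝 z) := by
    have h2 : Filter.Tendsto (fun j => γ₂ (u j)) atTop (𝓝 z) := (h₂.tendsto s₀).comp hus
    exact h2.congr fun j => (hu j).symm
  have key : ∀ ε : ℝ, 0 < ε → ∃ w, |w - s₀| ≤ ε ∧ γ₁ w = z := by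
    intro ε hε
    set path : C(unitInterval, Y) :=
      ⟨fun t => γ₁ (s₀ - ε + 2 * ε * (t : ℝ)),
        h₁.comp (by fun_prop)⟩ with hpath
    have hclosed := hY path
    have hIcc : Set.Icc (s₀ - ε) (s₀ + ε) ∈ 𝓝 s₀ :=
      Icc_mem_nhds (by linarith) (by linarith)
    have hev0 : ∀ᶠ j in atTop, u j ∈ Set.Icc (s₀ - ε) (s₀ + ε) := hus hIcc
    have hev : ∀ᶠ j in atTop, γ₁ (u j) ∈ Set.range path := by
      filter_upwards [hev0] with j hj
      refine ⟨⟨(u j - (s₀ - ε)) / (2 * ε), ?_, ?_⟩, ?_⟩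
      · have := hj.1
        have h2e : (0:ℝ) < 2 * ε := by positivity
        exact div_nonneg (by linarith) h2e.le
      · rw [div_le_one (by positivity)]
        have := hj.2
        linarith
      · show γ₁ (s₀ - ε + 2 * ε * ((u j - (s₀ - ε)) / (2 * ε))) = γ₁ (u j)
        congr 1
        field_simp
        ring
    obtain ⟨t, ht⟩ := hclosed.mem_of_tendsto hz hev
    refine ⟨s₀ - ε + 2 * ε * (t : ℝ), ?_, ht⟩
    have ht0 := t.2.1
    have ht1 := t.2.2
    rw [abs_le]
    constructor <;> nlinarith
  have hF : IsClosed (γ₁ ⁻¹' {z}) := (DH.singleton_closed hY z).preimage h₁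
  have hsF : s₀ ∈ γ₁ ⁻¹' {z} := by
    choose w hw1 hw2 using fun k : ℕ => key (1 / (k + 1)) (by positivity)
    have hwt : Filter.Tendsto w atTop (𝓝 s₀) := by
      rw [tendsto_iff_dist_tendsto_zero]
      refine squeeze_zero (fun k => dist_nonneg) (fun k => ?_)
        tendsto_one_div_add_atTop_nhds_zero_nat
      rw [Real.dist_eq]
      exact hw1 k
    have := mem_closure_of_tendsto hwt (Filter.Eventually.of_forall fun k =>
      show w k ∈ γ₁ ⁻¹' {z} from hw2 k)
    rwa [hF.closure_eq] at this
  exact hsF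

/-- In a Δ-Hausdorff space, the coincidence set of two continuous maps from a euclidean space
is closed. -/
lemma DH.coincidence_closed_euclidean (hY : DeltaHausdorff Y) {n : ℕ}
    {g₁ g₂ : (Fin n → ℝ) → Y} (h₁ : Continuous g₁) (h₂ : Continuous g₂) :
    IsClosed {t : Fin n → ℝ | g₁ t = g₂ t} := by
  refine isClosed_of_closure_subset fun t₀ ht₀ => ?_
  set c : ℝ := 2⁻¹ with hc_def
  have hc0 : (0 : ℝ) < c := by norm_num
  have hc1 : c < 1 := by norm_num
  have hcc : ∀ j : ℕ, c ^ j * 2 ^ j = 1 := fun j => by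
    rw [hc_def, ← mul_pow]; norm_num
  -- choose a rapidly converging sequence in the coincidence set
  have ha : ∀ j : ℕ, ∃ b : Fin n → ℝ, g₁ b = g₂ b ∧ dist t₀ b < c ^ j := by
    intro j
    obtain ⟨b, hb1, hb2⟩ := Metric.mem_closure_iff.1 ht₀ (c ^ j) (by positivity)
    exact ⟨b, hb1, hb2⟩
  choose a haC had using ha
  have hta : Filter.Tendsto a atTop (𝓝 t₀) := by
    rw [tendsto_iff_dist_tendsto_zero]
    refine squeeze_zero (fun k => dist_nonneg) (fun k => ?_)
      (tendsto_pow_atTop_nhds_zero_of_lt_one hc0.le hc1)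
    rw [dist_comm]
    exact (had k).le
  -- the transition functions
  set ψ : ℕ → ℝ → ℝ := fun j s => min 1 (max 0 ((s - (1 - c ^ j)) * 2 ^ (j + 1))) with hψ_def
  have hψcont : ∀ j, Continuous (ψ j) := fun j =>
    continuous_const.min (continuous_const.max
      (((continuous_id.sub continuous_const).mul continuous_const)))
  have hψ0 : ∀ j s, 0 ≤ ψ j s := fun j s => le_min zero_le_one (le_max_left _ _)
  have hψ1 : ∀ j s, ψ j s ≤ 1 := fun j s => min_le_left _ _
  have harg : ∀ j : ℕ, ∀ s : ℝ, 1 ≤ (s - (1 - c ^ j)) * 2 ^ (j + 1) → ψ j s = 1 := by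
    intro j s hs
    rw [hψ_def]
    exact min_eq_left (le_trans hs (le_max_right _ _))
  have hψ_lt : ∀ j i : ℕ, j < i → ψ j (1 - c ^ i) = 1 := by
    intro j i hji
    refine harg j _ ?_
    have h1 : c ^ i ≤ c ^ (j + 1) := pow_le_pow_of_le_one hc0.le hc1.le hji
    have h2 : c ^ (j + 1) * 2 ^ (j + 1) = 1 := hcc (j + 1)
    have h3 : c ^ j = 2 * c ^ (j + 1) := by
      rw [pow_succ, hc_def]; ring
    have h4 : (0 : ℝ) < 2 ^ (j + 1) := by positivity
    have h5 : c ^ (j + 1) ≤ c ^ j - c ^ i := by linarith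
    have := mul_le_mul_of_nonneg_right h5 h4.le
    have harg' : (1 - c ^ i - (1 - c ^ j)) = c ^ j - c ^ i := by ring
    rw [harg']
    linarith
  have hψ_ge : ∀ j i : ℕ, i ≤ j → ψ j (1 - c ^ i) = 0 := by
    intro j i hij
    have h1 : c ^ j ≤ c ^ i := pow_le_pow_of_le_one hc0.le hc1.le hij
    have h4 : (0 : ℝ) ≤ 2 ^ (j + 1) := by positivity
    have harg' : (1 - c ^ i - (1 - c ^ j)) = c ^ j - c ^ i := by ring
    rw [hψ_def]
    simp only
    rw [harg', max_eq_left (mul_nonpos_of_nonpos_of_nonneg (by linarith) h4),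
      min_eq_right zero_le_one]
  have hψ_one : ∀ j : ℕ, ψ j 1 = 1 := by
    intro j
    refine harg j _ ?_
    have h2 : c ^ j * 2 ^ (j + 1) = 2 := by
      rw [pow_succ, ← mul_assoc, hcc j]; ring
    have harg' : (1 - (1 - c ^ j)) = c ^ j := by ring
    rw [harg', h2]
    norm_num
  -- the infinite polygonal path through the sequence `a`
  set b : ℕ → (Fin n → ℝ) := fun j => a (j + 1) - a j with hb_def
  have hbnorm : ∀ j, ‖b j‖ ≤ 2 * c ^ j := by
    intro j
    have h1 : dist (a (j + 1)) t₀ < c ^ (j + 1) := by rw [dist_comm]; exact had (j + 1)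
    have h2 : dist t₀ (a j) < c ^ j := had j
    have h3 : c ^ (j + 1) ≤ c ^ j := pow_le_pow_of_le_one hc0.le hc1.le (Nat.le_succ j)
    calc ‖b j‖ = dist (a (j + 1)) (a j) := by rw [hb_def, dist_eq_norm]
    _ ≤ dist (a (j + 1)) t₀ + dist t₀ (a j) := dist_triangle _ _ _
    _ ≤ 2 * c ^ j := by linarith
  have hsum2c : Summable (fun j : ℕ => 2 * c ^ j) :=
    (summable_geometric_of_lt_one hc0.le hc1).mul_left 2
  set σ : ℝ → (Fin n → ℝ) := fun s => a 0 + ∑' j, ψ j s • b j with hσ_def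
  have hterm_bound : ∀ (j : ℕ) (s : ℝ), ‖ψ j s • b j‖ ≤ 2 * c ^ j := by
    intro j s
    rw [norm_smul, Real.norm_eq_abs, abs_of_nonneg (hψ0 j s)]
    calc ψ j s * ‖b j‖ ≤ 1 * ‖b j‖ :=
          mul_le_mul_of_nonneg_right (hψ1 j s) (norm_nonneg _)
    _ = ‖b j‖ := one_mul _
    _ ≤ 2 * c ^ j := hbnorm j
  have hσcont : Continuous σ :=
    continuous_const.add
      (continuous_tsum (fun j => (hψcont j).smul continuous_const) hsum2c hterm_bound)
  have hσ_at : ∀ i : ℕ, σ (1 - c ^ i) = a i := by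
    intro i
    have htsum : ∑' j, ψ j (1 - c ^ i) • b j
        = ∑ j ∈ Finset.range i, ψ j (1 - c ^ i) • b j := by
      refine tsum_eq_sum fun j hj => ?_
      rw [hψ_ge j i (le_of_not_gt fun h => hj (Finset.mem_range.2 h)), zero_smul]
    rw [hσ_def]
    simp only
    rw [htsum, Finset.sum_congr rfl (fun j hj => by
      rw [hψ_lt j i (Finset.mem_range.1 hj), one_smul]), Finset.sum_range_sub (f := a)]
    abel
  have hσ_one : σ 1 = t₀ := by
    have hsumb : Summable fun j => ‖b j‖ :=
      Summable.of_nonneg_of_le (fun j => norm_nonneg _) hbnorm hsum2c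
    have hpartial : Filter.Tendsto (fun i => ∑ j ∈ Finset.range i, b j) atTop (𝓝 (t₀ - a 0)) := by
      have heq : ∀ i, ∑ j ∈ Finset.range i, b j = a i - a 0 := fun i =>
        Finset.sum_range_sub (f := a) i
      simp only [heq]
      exact hta.sub_const (a 0)
    have hhs : HasSum b (t₀ - a 0) :=
      (hasSum_iff_tendsto_nat_of_summable_norm hsumb).2 hpartial
    have htsum : ∑' j, ψ j 1 • b j = t₀ - a 0 := by
      rw [tsum_congr (fun j => by rw [hψ_one j, one_smul])]
      exact hhs.tsum_eq
    rw [hσ_def]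
    simp only
    rw [htsum]
    abel
  -- conclude using the one-dimensional case
  have hD : IsClosed {s : ℝ | g₁ (σ s) = g₂ (σ s)} :=
    DH.coincidence_closed_real hY (h₁.comp hσcont) (h₂.comp hσcont)
  have hmem : ∀ i : ℕ, (1 - c ^ i) ∈ {s : ℝ | g₁ (σ s) = g₂ (σ s)} := fun i => by
    show g₁ (σ (1 - c ^ i)) = g₂ (σ (1 - c ^ i))
    rw [hσ_at i]
    exact haC i
  have hlim : Filter.Tendsto (fun i : ℕ => 1 - c ^ i) atTop (𝓝 (1 : ℝ)) := by
    have := (tendsto_pow_atTop_nhds_zero_of_lt_one hc0.le hc1).const_sub (1 : ℝ)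
    simpa using this
  have h1mem : (1 : ℝ) ∈ {s : ℝ | g₁ (σ s) = g₂ (σ s)} :=
    hD.mem_of_tendsto hlim (Filter.Eventually.of_forall hmem)
  have : g₁ (σ 1) = g₂ (σ 1) := h1mem
  rwa [hσ_one] at this

end Coincidence

section Quotient

variable {X Y : Type*} [TopologicalSpace X] [TopologicalSpace Y]
  [DeltaGeneratedSpace X] [DeltaGeneratedSpace Y] {f : X → Y}

lemma DH.claimA (hf : IsQuotientMap f) {U : Set (Y × Y)}
    (hU : IsOpen[deltaGenerated (X × X)] (Prod.map f f ⁻¹' U))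
    {m k : ℕ} {p₁ : (Fin m → ℝ) → X} (hp₁ : Continuous p₁)
    {q₂ : (Fin k → ℝ) → Y} (hq₂ : Continuous q₂) :
    IsOpen {st : (Fin m → ℝ) × (Fin k → ℝ) | (f (p₁ st.1), q₂ st.2) ∈ U} := by
  letI := DH.deltaGen_prod_left m (X := X)
  have hB' : IsOpen {sx : (Fin m → ℝ) × X | (f (p₁ sx.1), f sx.2) ∈ U} :=
    DH.isOpen_preimage_of_deltaGen (W := (Fin m → ℝ) × X) hU
      ((hp₁.comp continuous_fst).prodMk continuous_snd)
  have hquot := DH.isQuotientMap_prodMap_id_left (L := Fin m → ℝ) hf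
  have hB : IsOpen {sy : (Fin m → ℝ) × Y | (f (p₁ sy.1), sy.2) ∈ U} := by
    rw [← hquot.isOpen_preimage]
    exact hB'
  exact hB.preimage (continuous_fst.prodMk (hq₂.comp continuous_snd))

lemma DH.claimB (hf : IsQuotientMap f) {U : Set (Y × Y)}
    (hU : IsOpen[deltaGenerated (X × X)] (Prod.map f f ⁻¹' U))
    {m k : ℕ} {q₁ : (Fin m → ℝ) → Y} (hq₁ : Continuous q₁)
    {q₂ : (Fin k → ℝ) → Y} (hq₂ : Continuous q₂) :
    IsOpen {st : (Fin m → ℝ) × (Fin k → ℝ) | (q₁ st.1, q₂ st.2) ∈ U} := by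
  have hC' : IsOpen {xt : X × (Fin k → ℝ) | (f xt.1, q₂ xt.2) ∈ U} := by
    letI := DH.deltaGen_prod_right k (X := X)
    rw [IsGeneratedBy.isOpen_iff (fun n : ℕ => Fin n → ℝ)]
    intro j r
    have hA := DH.claimA hf hU (continuous_fst.comp r.continuous) hq₂
    exact hA.preimage (continuous_id.prodMk (continuous_snd.comp r.continuous))
  have hC : IsOpen {yt : Y × (Fin k → ℝ) | (yt.1, q₂ yt.2) ∈ U} := by
    rw [← (DH.isQuotientMap_prodMap_id_right (L := Fin k → ℝ) hf).isOpen_preimage]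
    exact hC'
  exact hC.preimage ((hq₁.comp continuous_fst).prodMk continuous_snd)

end Quotient

/-- Let `f : X → Y` be a quotient map between Δ-generated spaces.  Then `Y` is
Δ-Hausdorff iff `{(x₁, x₂) | f x₁ = f x₂}` is closed in the Δ-kelleyfication of
the product `X × X`. -/
theorem deltaHausdorff_quotient_iff
    {X Y : Type*} [TopologicalSpace X] [TopologicalSpace Y]
    [DeltaGeneratedSpace X] [DeltaGeneratedSpace Y]
    (f : X → Y) (hf : Topology.IsQuotientMap f) :
    DeltaHausdorff Y ↔
      IsClosed[TopologicalSpace.deltaGenerated (X × X)] {p : X × X | f p.1 = f p.2} := by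
  constructor
  · -- forward direction
    intro hY
    rw [DH.isClosed_deltaGenerated_iff]
    intro n p
    exact DH.coincidence_closed_euclidean hY
      (hf.continuous.comp (continuous_fst.comp p.continuous))
      (hf.continuous.comp (continuous_snd.comp p.continuous))
  · -- backward direction
    intro hR
    intro g
    rw [← hf.isClosed_preimage, DH.deltaGen_isClosed_iff]
    intro k p
    -- the relevant Δ-open set
    have hU : IsOpen[TopologicalSpace.deltaGenerated (X × X)]
        (Prod.map f f ⁻¹' (Set.diagonal Y)ᶜ) := by
      have hset : Prod.map f f ⁻¹' (Set.diagonal Y)ᶜ = {p : X × X | f p.1 = f p.2}ᶜ := by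
        ext ⟨a, b⟩
        simp [Set.mem_diagonal_iff]
      rw [hset]
      exact hR.isOpen_compl
    set q₂ : (Fin 1 → ℝ) → Y := fun v => g (Set.projIcc 0 1 zero_le_one (v 0)) with hq₂_def
    have hq₂cont : Continuous q₂ :=
      g.continuous.comp (continuous_projIcc.comp (continuous_apply 0))
    have hopen := DH.claimB hf hU (hf.continuous.comp p.continuous) hq₂cont
    have hcl : IsClosed {st : (Fin k → ℝ) × (Fin 1 → ℝ) | f (p st.1) = q₂ st.2} := by
      rw [← isOpen_compl_iff]
      convert hopen using 1
      ext
      simp [Set.mem_diagonal_iff]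
    have hK2 : IsClosed {ts : (Fin k → ℝ) × unitInterval | f (p ts.1) = g ts.2} := by
      have hcont : Continuous fun ts : (Fin k → ℝ) × unitInterval =>
          (ts.1, fun _ : Fin 1 => (ts.2 : ℝ)) :=
        continuous_fst.prodMk (continuous_pi fun _ => continuous_subtype_val.comp continuous_snd)
      have hpre := hcl.preimage hcont
      convert hpre using 1
      ext ⟨t, s⟩
      simp only [Set.mem_preimage, Set.mem_setOf_eq, hq₂_def]
      rw [Set.projIcc_val zero_le_one s]
    have himg : p ⁻¹' (f ⁻¹' Set.range g)
        = Prod.fst '' {ts : (Fin k → ℝ) × unitInterval | f (p ts.1) = g ts.2} := by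
      ext t
      simp only [Set.mem_preimage, Set.mem_range, Set.mem_image, Set.mem_setOf_eq]
      constructor
      · rintro ⟨s, hs⟩
        exact ⟨(t, s), hs.symm, rfl⟩
      · rintro ⟨⟨t', s⟩, hts, rfl⟩
        exact ⟨s, hts.symm⟩
    rw [himg]
    exact isClosedMap_fst_of_compactSpace _ hK2
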